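/- Let k ≥ 2 and let T be a clause tree for x₁,…,x_k. Let I be an assignment with I(x₁) = ⋯ = I(x_k) = 0 and with the root's auxiliary variable assigned 1. Then the maximum, over all extensions of I to the remaining internal auxiliary variables, of the number of constraints of Tᵗ(T) satisfied equals 2(k−2). -/

import Mathlib

/-- A (candidate) clause tree: a full binary tree whose leaves are labeled by (indices of)
the clause variables x_i and whose internal nodes carry (indices of) auxiliary variables
b_v.  Leaf labels are interpreted by an assignment `x : ℕ → Bool` and internal labels by
an assignment `b : ℕ → Bool`. -/
inductive ClauseTree : Type
  | leaf (i : ℕ)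
  | node (v : ℕ) (l r : ClauseTree)

namespace ClauseTree

/-- Labels of the leaves, left to right. -/
def leaves : ClauseTree → List ℕ
  | leaf i => [i]
  | node _ l r => leaves l ++ leaves r

/-- Labels of the internal nodes. -/
def internals : ClauseTree → List ℕ
  | leaf _ => []
  | node v l r => v :: (internals l ++ internals r)

/-- `t` is a clause tree for x₁,…,x_k: its leaves are labeled bijectively by 1,…,k and
its internal auxiliary variables are pairwise distinct (they are fresh by construction,
living in a namespace separate from the leaf labels). -/
def IsClauseTree (k : ℕ) (t : ClauseTree) : Prop :=
  t.leaves.Nodup ∧ (∀ i, i ∈ t.leaves ↔ i ∈ Finset.Icc 1 k) ∧ t.internals.Nodup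

/-- var(v) of the root of `t`: the value of the leaf variable if `t` is a leaf, and the
value of the auxiliary variable b_v if the root is an internal node v. -/
def rootVar (x b : ℕ → Bool) : ClauseTree → Bool
  | leaf i => x i
  | node v _ _ => b v

/-- Number of satisfied constraints among the triangle {p ⊕ q = 1, p ⊕ r = 0, q ⊕ r = 0}. -/
def triCount (p q r : Bool) : ℕ :=
  (if xor p q = true then 1 else 0) +
  (if xor p r = false then 1 else 0) +
  (if xor q r = false then 1 else 0)

/-- Number of constraints of Tᵗ(t) satisfied by the assignment given by `x` and `b`:
for every internal node v with children u, w, the triangle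
{var(u) ⊕ var(w) = 1, var(u) ⊕ b_v = 0, var(w) ⊕ b_v = 0} (each of weight 1/2). -/
def countSat (x b : ℕ → Bool) : ClauseTree → ℕ
  | leaf _ => 0
  | node v l r =>
      countSat x b l + countSat x b r + triCount (rootVar x b l) (rootVar x b r) (b v)

/-- Total number of constraints of Tᵗ(t). -/
def numConstraints : ClauseTree → ℕ
  | leaf _ => 0
  | node _ l r => numConstraints l + numConstraints r + 3

/-- The OR of the values of the leaves below (the root of) `t`. -/
def orLeaves (x : ℕ → Bool) : ClauseTree → Bool
  | leaf i => x i
  | node _ l r => orLeaves x l || orLeaves x r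

/-- The assignment `b` of the internal auxiliary variables agrees with the canonical
extension of `x`: every internal node v gets the OR of the values of the leaves below v. -/
def Agrees (x b : ℕ → Bool) : ClauseTree → Prop
  | leaf _ => True
  | node v l r => b v = orLeaves x (node v l r) ∧ Agrees x b l ∧ Agrees x b r

end ClauseTree

/-!
STATEMENT 16: For k ≥ 2 and any clause tree T for x₁,…,x_k (with root an internal node
v₀ with subtrees l, r), if I assigns 0 to all of x₁,…,x_k and 1 to the root's auxiliary
variable b_{v₀}, then the maximum number of constraints of Tᵗ(T) satisfiable over all
extensions of I to the remaining internal auxiliary variables is exactly 2(k−2).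
-/

namespace ClauseTree

lemma leaves_length_aux (t : ClauseTree) : t.leaves.length = t.internals.length + 1 := by
  induction t with
  | leaf i => simp [leaves, internals]
  | node v l r ihl ihr =>
    simp only [leaves, internals, List.length_append, List.length_cons, ihl, ihr]
    omega

lemma tri_bound (p q bv : Bool) :
    triCount p q bv + (if bv then 2 else 0) ≤
      2 + (if p then 2 else 0) + (if q then 2 else 0) := by
  cases p <;> cases q <;> cases bv <;> decide

lemma upper_aux (x b : ℕ → Bool) :
    ∀ t : ClauseTree, (∀ i ∈ t.leaves, x i = false) →
      countSat x b t + (if rootVar x b t then 2 else 0) ≤ 2 * t.internals.length := by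
  intro t
  induction t with
  | leaf i =>
    intro h
    simp [countSat, rootVar, internals, h i (by simp [leaves])]
  | node v l r ihl ihr =>
    intro h
    have hl := ihl (fun i hi => h i (by simp [leaves, hi]))
    have hr := ihr (fun i hi => h i (by simp [leaves, hi]))
    have htri := tri_bound (rootVar x b l) (rootVar x b r) (b v)
    simp only [countSat, rootVar, internals, List.length_cons, List.length_append] at *
    by_cases hbv : b v = true <;> simp only [hbv, ↓reduceIte] at htri ⊢ <;> omega

lemma exact_aux (x b : ℕ → Bool) :
    ∀ t : ClauseTree, (∀ i ∈ t.leaves, x i = false) →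
      (∀ v ∈ t.internals, b v = false) →
      rootVar x b t = false ∧ countSat x b t = 2 * t.internals.length := by
  intro t
  induction t with
  | leaf i =>
    intro hxl _
    exact ⟨hxl i (by simp [leaves]), by simp [countSat, internals]⟩
  | node v l r ihl ihr =>
    intro hxl hb
    obtain ⟨pl, cl⟩ := ihl (fun i hi => hxl i (by simp [leaves, hi]))
      (fun w hw => hb w (by simp [internals, hw]))
    obtain ⟨pr, cr⟩ := ihr (fun i hi => hxl i (by simp [leaves, hi]))
      (fun w hw => hb w (by simp [internals, hw]))
    have hv : b v = false := hb v (by simp [internals])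
    refine ⟨hv, ?_⟩
    simp only [countSat, internals, List.length_cons, List.length_append]
    rw [cl, cr, pl, pr, hv]
    have : triCount false false false = 2 := by decide
    omega

end ClauseTree

theorem clause_tree_all_false_root_true (k : ℕ) (hk : 2 ≤ k)
    (v₀ : ℕ) (l r : ClauseTree)
    (ht : ClauseTree.IsClauseTree k (ClauseTree.node v₀ l r))
    (x : ℕ → Bool) (hx : ∀ i ∈ Finset.Icc 1 k, x i = false) :
    IsGreatest {n : ℕ | ∃ b : ℕ → Bool, b v₀ = true ∧
        n = ClauseTree.countSat x b (ClauseTree.node v₀ l r)}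
      (2 * (k - 2)) := by
  classical
  obtain ⟨hnodL, hmem, hnodI⟩ := ht
  -- length of leaves is k
  have hlen : (ClauseTree.node v₀ l r).leaves.length = k := by
    have hset : (ClauseTree.node v₀ l r).leaves.toFinset = Finset.Icc 1 k := by
      ext i; simp [List.mem_toFinset, hmem i]
    have := List.toFinset_card_of_nodup hnodL
    rw [hset] at this
    simpa using this.symm
  have hint : (ClauseTree.node v₀ l r).internals.length = k - 1 := by
    have := ClauseTree.leaves_length_aux (ClauseTree.node v₀ l r)
    omega
  have hxleaf : ∀ i ∈ (ClauseTree.node v₀ l r).leaves, x i = false := by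
    intro i hi
    exact hx i ((hmem i).1 hi)
  constructor
  · -- membership
    refine ⟨fun w => decide (w = v₀), by simp, ?_⟩
    have hv0 : v₀ ∉ l.internals ++ r.internals := by
      have := hnodI
      simp only [ClauseTree.internals, List.nodup_cons] at this
      exact this.1
    have hbfl : ∀ w ∈ l.internals, (fun w => decide (w = v₀)) w = false := by
      intro w hw
      simp only [decide_eq_false_iff_not]
      intro h; subst h; exact hv0 (by simp [hw])
    have hbfr : ∀ w ∈ r.internals, (fun w => decide (w = v₀)) w = false := by
      intro w hw
      simp only [decide_eq_false_iff_not]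
      intro h; subst h; exact hv0 (by simp [hw])
    obtain ⟨pl, cl⟩ := ClauseTree.exact_aux x _ l
      (fun i hi => hxleaf i (by simp [ClauseTree.leaves, hi])) hbfl
    obtain ⟨pr, cr⟩ := ClauseTree.exact_aux x _ r
      (fun i hi => hxleaf i (by simp [ClauseTree.leaves, hi])) hbfr
    have htri : ClauseTree.triCount false false true = 0 := by decide
    simp only [ClauseTree.countSat, ClauseTree.internals, List.length_cons,
      List.length_append] at *
    rw [cl, cr, pl, pr]
    simp only [ClauseTree.triCount]
    norm_num
    omega
  · -- upper bound
    rintro n ⟨b, hb, rfl⟩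
    have := ClauseTree.upper_aux x b (ClauseTree.node v₀ l r) hxleaf
    simp only [ClauseTree.rootVar, hb, if_true] at this
    omega
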